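/- Let Π be a set (of joint plans) and let C₁, C₂ be predicates on Π. Call (C₁, C₂) a sound pair if every optimal element of a nonempty set S ⊆ Π (with respect to a cost function cost : Π → ℝ) satisfies C₁ or C₂. If N, N₁, N₂ ⊆ Π with N₁ = {π ∈ N | C₁ π} and N₂ = {π ∈ N | C₂ π}, and (C₁, C₂) is sound for N (every cost-minimal element of N satisfies C₁ or C₂), then the set of cost-minimal elements of N equals the set of cost-minimal elements of N₁ ∪ N₂ intersected with the minimizers of N; in particular, if N has a cost-minimal element, then N₁ ∪ N₂ contains a cost-minimal element of N, and inf over N₁ ∪ N₂ of cost equals inf over N of cost when the infimum of N is attained. -/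
import Mathlib


/-- Splitting a CT node `N` by a sound pair of constraints `(C₁, C₂)` into children
`N₁, N₂` loses no optimal joint plan: the cost-minimizers of `N` equal the
cost-minimizers of `N₁ ∪ N₂` intersected with the minimizers of `N`; in particular if
`N` has a cost-minimal element then `N₁ ∪ N₂` contains a cost-minimal element of `N`
and the (attained) infima of the cost agree. -/
theorem ccbs_split_preserves_optimal {α : Type*} (cost : α → ℝ)
    (C₁ C₂ : α → Prop) (N N₁ N₂ : Set α)
    (hN₁ : N₁ = {π ∈ N | C₁ π}) (hN₂ : N₂ = {π ∈ N | C₂ π})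
    (hsound : ∀ π ∈ N, (∀ π' ∈ N, cost π ≤ cost π') → C₁ π ∨ C₂ π) :
    ({π ∈ N | ∀ π' ∈ N, cost π ≤ cost π'} =
      {π ∈ N₁ ∪ N₂ | ∀ π' ∈ N₁ ∪ N₂, cost π ≤ cost π'} ∩
        {π ∈ N | ∀ π' ∈ N, cost π ≤ cost π'}) ∧
    ((∃ π ∈ N, ∀ π' ∈ N, cost π ≤ cost π') →
      (∃ π ∈ N₁ ∪ N₂, π ∈ N ∧ ∀ π' ∈ N, cost π ≤ cost π') ∧
        sInf (cost '' (N₁ ∪ N₂)) = sInf (cost '' N)) := by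
  have hsub : N₁ ∪ N₂ ⊆ N := by
    rintro x (hx | hx)
    · exact (hN₁ ▸ hx).1
    · exact (hN₂ ▸ hx).1
  have hmem : ∀ π ∈ N, (∀ π' ∈ N, cost π ≤ cost π') → π ∈ N₁ ∪ N₂ := by
    intro π hπ hmin
    rcases hsound π hπ hmin with h | h
    · exact Or.inl (hN₁ ▸ ⟨hπ, h⟩)
    · exact Or.inr (hN₂ ▸ ⟨hπ, h⟩)
  constructor
  · ext π
    constructor
    · rintro ⟨hπ, hmin⟩
      exact ⟨⟨hmem π hπ hmin, fun π' hπ' => hmin π' (hsub hπ')⟩, hπ, hmin⟩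
    · rintro ⟨_, h⟩
      exact h
  · rintro ⟨π, hπ, hmin⟩
    have hπU : π ∈ N₁ ∪ N₂ := hmem π hπ hmin
    refine ⟨⟨π, hπU, hπ, hmin⟩, ?_⟩
    have h1 : IsLeast (cost '' (N₁ ∪ N₂)) (cost π) :=
      ⟨⟨π, hπU, rfl⟩, by rintro _ ⟨x, hx, rfl⟩; exact hmin x (hsub hx)⟩
    have h2 : IsLeast (cost '' N) (cost π) :=
      ⟨⟨π, hπ, rfl⟩, by rintro _ ⟨x, hx, rfl⟩; exact hmin x hx⟩
    rw [h1.csInf_eq, h2.csInf_eq]
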